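/- For all n ≥ 1, |Σ_{k=1}^n μ(k)/k| ≤ 1. -/

import Mathlib

open Finset ArithmeticFunction
open scoped ArithmeticFunction.Moebius

lemma moebius_div_sum_divisors (k : ℕ) :
    ∑ d ∈ k.divisors, (μ d : ℤ) = if k = 1 then 1 else 0 := by
  rw [← coe_mul_zeta_apply, moebius_mul_coe_zeta, one_apply]

lemma key_identity (n : ℕ) (hn : 1 ≤ n) :
    ∑ d ∈ Finset.Icc 1 n, (μ d : ℤ) * (n / d : ℕ) = 1 := by
  have h1 : ∑ k ∈ Finset.Icc 1 n, ∑ d ∈ k.divisors, (μ d : ℤ) = 1 := by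
    simp_rw [moebius_div_sum_divisors]
    rw [Finset.sum_ite_eq' (Finset.Icc 1 n) 1 (fun _ => (1:ℤ))]
    simp [hn]
  rw [← h1]
  have h2 : ∀ k ∈ Finset.Icc 1 n, ∑ d ∈ k.divisors, (μ d : ℤ)
      = ∑ d ∈ Finset.Icc 1 n, if d ∣ k then (μ d : ℤ) else 0 := by
    intro k hk
    rw [Finset.mem_Icc] at hk
    rw [← Finset.sum_filter]
    congr 1
    ext d
    simp only [Nat.mem_divisors, Finset.mem_filter, Finset.mem_Icc]
    constructor
    · rintro ⟨hd, hk0⟩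
      refine ⟨⟨Nat.one_le_iff_ne_zero.2 ?_, le_trans (Nat.le_of_dvd (by omega) hd) hk.2⟩, hd⟩
      rintro rfl; exact hk0 (Nat.eq_zero_of_zero_dvd hd)
    · rintro ⟨_, hd⟩; exact ⟨hd, by omega⟩
  rw [Finset.sum_congr rfl h2, Finset.sum_comm]
  refine Finset.sum_congr rfl fun d hd => ?_
  rw [← Finset.sum_filter, Finset.sum_const, show Finset.Icc 1 n = Finset.Ioc 0 n from by
    rw [← Finset.Icc_add_one_left_eq_Ioc, zero_add], Nat.Ioc_filter_dvd_card_eq_div, nsmul_eq_mul, mul_comm]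

lemma abs_mu_le_one (k : ℕ) : |(μ k : ℝ)| ≤ 1 := by
  by_cases h : Squarefree k
  · rw [moebius_apply_of_squarefree h]
    push_cast
    rw [abs_pow, abs_neg, abs_one, one_pow]
  · simp [moebius_eq_zero_of_not_squarefree h]

theorem stmt_6 :
    ∀ n : ℕ, 1 ≤ n → |∑ k ∈ Finset.Icc 1 n, (μ k : ℝ) / k| ≤ 1 := by
  intro n hn
  have hn0 : (0:ℝ) < n := by exact_mod_cast hn
  set S : ℝ := ∑ k ∈ Finset.Icc 1 n, (μ k : ℝ) / k with hS
  set f : ℕ → ℝ := fun k => (μ k : ℝ) * ((n % k : ℕ) : ℝ) / k with hf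
  have hmain : (n:ℝ) * S = 1 + ∑ k ∈ Finset.Icc 1 n, f k := by
    have h0 := key_identity n hn
    have h1 : ∑ k ∈ Finset.Icc 1 n, (μ k : ℝ) * ((n / k : ℕ) : ℝ) = 1 := by
      calc ∑ k ∈ Finset.Icc 1 n, (μ k : ℝ) * ((n / k : ℕ) : ℝ)
          = ((∑ k ∈ Finset.Icc 1 n, (μ k : ℤ) * (n / k : ℕ) : ℤ) : ℝ) := by push_cast; rfl
        _ = 1 := by rw [h0]; norm_num
    rw [hS, Finset.mul_sum, ← h1, ← Finset.sum_add_distrib]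
    refine Finset.sum_congr rfl fun k hk => ?_
    rw [Finset.mem_Icc] at hk
    have hk0 : (0:ℝ) < k := by exact_mod_cast hk.1
    have hnkey : (n:ℝ) = (k:ℝ) * ((n / k : ℕ) : ℝ) + ((n % k : ℕ) : ℝ) := by
      exact_mod_cast (Nat.div_add_mod n k).symm
    calc (n:ℝ) * ((μ k : ℝ) / k)
        = (μ k : ℝ) * (((k:ℝ) * ((n / k : ℕ) : ℝ) + ((n % k : ℕ) : ℝ)) / k) := by
          rw [← hnkey]; ring
      _ = (μ k : ℝ) * ((n / k : ℕ) : ℝ) + f k := by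
          rw [hf]; field_simp
  have hfb : ∀ k ∈ Finset.Icc 1 n, |f k| ≤ 1 - 1/n := by
    intro k hk
    rw [Finset.mem_Icc] at hk
    have hk0 : (0:ℝ) < k := by exact_mod_cast hk.1
    have hmod : ((n % k : ℕ) : ℝ) ≤ (k:ℝ) - 1 := by
      have h := Nat.mod_lt n (show 0 < k by omega)
      have h2 : ((n % k : ℕ) : ℝ) < (k:ℝ) := by exact_mod_cast h
      have h3 : ((n % k : ℕ) : ℝ) + 1 ≤ (k:ℝ) := by exact_mod_cast h
      linarith
    have hkn : (k:ℝ) ≤ n := by exact_mod_cast hk.2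
    calc |f k| = |(μ k : ℝ)| * ((n % k : ℕ) : ℝ) / k := by
          rw [hf, abs_div, abs_mul, abs_of_pos hk0, Nat.abs_cast]
      _ ≤ 1 * ((k:ℝ) - 1) / k := by
          gcongr
          exact abs_mu_le_one k
      _ = 1 - 1/k := by field_simp
      _ ≤ 1 - 1/n := by gcongr
  have hsum : |∑ k ∈ Finset.Icc 1 n, f k| ≤ (n:ℝ) - 1 := by
    calc |∑ k ∈ Finset.Icc 1 n, f k| ≤ ∑ k ∈ Finset.Icc 1 n, |f k| :=
          Finset.abs_sum_le_sum_abs _ _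
      _ ≤ ∑ k ∈ Finset.Icc 1 n, (1 - 1/(n:ℝ)) := Finset.sum_le_sum hfb
      _ = (n:ℝ) * (1 - 1/n) := by
          rw [Finset.sum_const, Nat.card_Icc]
          simp [nsmul_eq_mul]
      _ = (n:ℝ) - 1 := by field_simp
  have hNS : |(n:ℝ) * S| ≤ n := by
    rw [hmain]
    calc |1 + ∑ k ∈ Finset.Icc 1 n, f k| ≤ |(1:ℝ)| + |∑ k ∈ Finset.Icc 1 n, f k| :=
          abs_add_le _ _
      _ ≤ 1 + ((n:ℝ) - 1) := by rw [abs_one]; linarith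
      _ = n := by ring
  rw [abs_mul, abs_of_pos hn0] at hNS
  exact (mul_le_iff_le_one_right hn0).mp (by linarith)
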